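/- If the greedy algorithm on a matroid, run with orders τ and τ' differing by an adjacent swap of elements u, v, produces bases x and x', and v ∈ x, then x = x'. -/

import Mathlib

open Classical in
/-- The greedy algorithm on a matroid: process elements in the order of the list, adding
each element whenever independence is preserved. -/
noncomputable def matroidGreedy {α : Type*} (M : Matroid α) (l : List α) : Set α :=
  l.foldl (fun s e => if M.Indep (insert e s) then insert e s else s) ∅

open Classical in
private lemma greedy_foldl_subset {α : Type*} (M : Matroid α) (l : List α) (s : Set α) :
    l.foldl (fun s e => if M.Indep (insert e s) then insert e s else s) s ⊆
      s ∪ {a | a ∈ l} := by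
  induction l generalizing s with
  | nil => simp
  | cons e l ih =>
    simp only [List.foldl_cons]
    have hstep : (if M.Indep (insert e s) then insert e s else s) ⊆ insert e s := by
      split <;> simp [Set.subset_insert]
    refine (ih _).trans ?_
    intro a ha
    rcases ha with ha | ha
    · rcases hstep ha with h | h <;> simp_all
    · simp_all

open Classical in
/-- if the greedy algorithm, run with orders `τ` and `τ'` differing by an
adjacent swap of `u` (earlier in `τ`) and `v`, produces bases `x` and `x'`, and `v ∈ x`,
then `x = x'`. -/
theorem greedy_adjacent_swap_eq_of_later_mem
    {α : Type*} [Fintype α] (M : Matroid α)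
    (τ τ' : List α) (hnd : τ.Nodup) (hfull : ∀ a : α, a ∈ τ)
    (u v : α)
    (hswap : ∃ l₁ l₂ : List α, τ = l₁ ++ u :: v :: l₂ ∧ τ' = l₁ ++ v :: u :: l₂)
    (x x' : Set α) (hx : x = matroidGreedy M τ) (hx' : x' = matroidGreedy M τ')
    (hv : v ∈ x) :
    x = x' := by
  obtain ⟨l₁, l₂, h1, h2⟩ := hswap
  subst h1 h2 hx hx'
  set f : Set α → α → Set α := fun s e => if M.Indep (insert e s) then insert e s else s with hf
  -- nodup facts
  have hvl₁ : v ∉ l₁ := by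
    intro h; exact (List.disjoint_of_nodup_append hnd) h (by simp)
  have hvl₂ : v ∉ l₂ := by
    have := (List.nodup_append.mp hnd).1 -- nothing; use sublist
    have h2 := (List.nodup_append.mp hnd).2.1
    simp only [List.nodup_cons] at h2
    exact fun h => h2.2.1 (by simp [h])
  have huv : u ≠ v := by
    have h2 := (List.nodup_append.mp hnd).2.1
    simp only [List.nodup_cons] at h2
    exact fun h => h2.1 (by simp [h])
  set s : Set α := l₁.foldl f ∅ with hs
  have hvs : v ∉ s := by
    intro h
    have := greedy_foldl_subset M l₁ ∅ h
    simp at this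
    exact hvl₁ this
  -- unfold greedy over appended lists
  have e1 : matroidGreedy M (l₁ ++ u :: v :: l₂) = l₂.foldl f (f (f s u) v) := by
    simp [matroidGreedy, List.foldl_append, hs, hf]
  have e2 : matroidGreedy M (l₁ ++ v :: u :: l₂) = l₂.foldl f (f (f s v) u) := by
    simp [matroidGreedy, List.foldl_append, hs, hf]
  rw [e1] at hv ⊢
  rw [e2]
  -- v must have been added at its step
  have hiv : M.Indep (insert v (f s u)) := by
    by_contra hno
    have hfv : f (f s u) v = f s u := by exact if_neg hno
    rw [hfv] at hv
    have hsub := greedy_foldl_subset M l₂ (f s u) hv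
    have hvfsu : v ∉ f s u := by
      by_cases h : M.Indep (insert u s) <;> simp [hf, h, hvs, Ne.symm huv]
    rcases hsub with h | h
    · exact hvfsu h
    · exact hvl₂ h
  have hfv : f (f s u) v = insert v (f s u) := by exact if_pos hiv
  congr 1
  rw [hfv]
  by_cases ha : M.Indep (insert u s)
  · have hfu : f s u = insert u s := by simp [hf, ha]
    rw [hfu] at hiv ⊢
    have hivs : M.Indep (insert v s) :=
      hiv.subset (Set.insert_subset_insert (Set.subset_insert _ _))
    have hfsv : f s v = insert v s := by simp [hf, hivs]
    have hcomm : insert u (insert v s) = insert v (insert u s) := Set.insert_comm u v s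
    have : f (insert v s) u = insert u (insert v s) := by
      simp [hf, hcomm, hiv]
    rw [hfsv, this, hcomm]
  · have hfu : f s u = s := by simp [hf, ha]
    rw [hfu] at hiv ⊢
    have hfsv : f s v = insert v s := by simp [hf, hiv]
    have hnu : ¬ M.Indep (insert u (insert v s)) := by
      intro h
      exact ha (h.subset (Set.insert_subset_insert (Set.subset_insert _ _)))
    rw [hfsv]
    simp [hf, hnu]
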